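/- Let R be a commutative ring satisfying: for every r ∈ R, every R-module map seemingly divisible by r is divisible by r. Then for every multiplicative set T ⊆ R, the localization T⁻¹R satisfies the same property. -/

import Mathlib

universe u

/-- If every `R`-module map seemingly divisible by an element is divisible by it,
then the same holds for every localization `T⁻¹R` of `R` at a multiplicative set `T`. -/
theorem stmt5 {R : Type u} [CommRing R]
    (hR : ∀ (r : R) (M N : Type u) [AddCommGroup M] [Module R M] [AddCommGroup N]
        [Module R N] (f : M →ₗ[R] N),
        (∀ m : M, r • m = 0 → f m = 0) → (∀ m : M, ∃ n : N, f m = r • n) →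
        ∃ g : M →ₗ[R] N, f = r • g)
    (T : Submonoid R) :
    ∀ (r : Localization T) (M N : Type u) [AddCommGroup M] [Module (Localization T) M]
        [AddCommGroup N] [Module (Localization T) N] (f : M →ₗ[Localization T] N),
        (∀ m : M, r • m = 0 → f m = 0) → (∀ m : M, ∃ n : N, f m = r • n) →
        ∃ g : M →ₗ[Localization T] N, f = r • g := by
  intro r M N _ _ _ _ f h1 h2
  obtain ⟨⟨r₀, t⟩, hrt⟩ := IsLocalization.mk'_surjective T r
  simp only at hrt
  letI : Module R M := Module.compHom M (algebraMap R (Localization T))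
  letI : Module R N := Module.compHom N (algebraMap R (Localization T))
  haveI : IsScalarTower R (Localization T) M := ⟨fun x y z => by
    show (x • y) • z = algebraMap R (Localization T) x • (y • z)
    rw [Algebra.smul_def, mul_smul]⟩
  haveI : IsScalarTower R (Localization T) N := ⟨fun x y z => by
    show (x • y) • z = algebraMap R (Localization T) x • (y • z)
    rw [Algebra.smul_def, mul_smul]⟩
  have hu : IsUnit (algebraMap R (Localization T) t) :=
    IsLocalization.map_units (Localization T) t
  set v := hu.unit with hv
  have hvv : (v : Localization T) = algebraMap R (Localization T) t := rfl
  have ha : r * algebraMap R (Localization T) t = algebraMap R (Localization T) r₀ := by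
    rw [← hrt]; exact IsLocalization.mk'_spec (Localization T) r₀ t
  have hsmulM : ∀ m : M, r₀ • m = r • ((v : Localization T) • m) := fun m => by
    show algebraMap R (Localization T) r₀ • m = r • ((v : Localization T) • m)
    rw [hvv, ← ha, mul_smul]
  have hsmulN : ∀ n : N, r₀ • n = r • ((v : Localization T) • n) := fun n => by
    show algebraMap R (Localization T) r₀ • n = r • ((v : Localization T) • n)
    rw [hvv, ← ha, mul_smul]
  have h1' : ∀ m : M, r₀ • m = 0 → (f.restrictScalars R) m = 0 := by
    intro m hm
    rw [hsmulM] at hm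
    have h := h1 _ hm
    simp only [map_smul] at h
    have h0 : ((v⁻¹ : (Localization T)ˣ) : Localization T) •
        ((v : Localization T) • f m) = 0 := by rw [h, smul_zero]
    rwa [smul_smul, Units.inv_mul, one_smul] at h0
  have h2' : ∀ m : M, ∃ n : N, (f.restrictScalars R) m = r₀ • n := by
    intro m
    obtain ⟨n, hn⟩ := h2 m
    refine ⟨((v⁻¹ : (Localization T)ˣ) : Localization T) • n, ?_⟩
    rw [hsmulN, smul_smul, smul_smul, mul_assoc, Units.mul_inv, mul_one]
    exact hn
  obtain ⟨g, hg⟩ := hR r₀ M N (f.restrictScalars R) h1' h2'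
  refine ⟨(v : Localization T) •
    (g.extendScalarsOfIsLocalization T (Localization T)), ?_⟩
  ext m
  have hfm : f m = r₀ • g m := by
    have := congrFun (congrArg DFunLike.coe hg) m
    simpa using this
  rw [hfm, hsmulN]
  simp [smul_smul, mul_comm]
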